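/- Let R = ℂ[x,x⁻¹,y,y⁻¹]. Let A, B, C ⊆ R be the ℂ-subspaces spanned by the monomials xⁱyʲ with, respectively: i ≥ 0 and j ≥ 0 (A); i ≥ 0 and j ∈ ℤ (B); i ∈ ℤ and j ≥ 0 (C). Then {f ∈ x⁻¹B : f·A ⊆ B + C} = x⁻¹A + B. (This is the self-duality of the lattice (x⁻¹A + B)/B for ⟨1_y⟩ on the chart U_{σ₁}, which makes the corresponding entry of d¹ vanish.) -/

import Mathlib

noncomputable section

/-- The Laurent polynomial ring `ℂ[x,x⁻¹,y,y⁻¹]` as the monoid algebra of `ℤ × ℤ` over `ℂ`. -/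
abbrev LaurentR : Type := AddMonoidAlgebra ℂ (ℤ × ℤ)

/-- The monomial `xⁱyʲ`. -/
def mono (i j : ℤ) : LaurentR := AddMonoidAlgebra.single (i, j) 1

/-- `x` -/
def xx : LaurentR := mono 1 0
/-- `x⁻¹` -/
def xxInv : LaurentR := mono (-1) 0
/-- `y` -/
def yy : LaurentR := mono 0 1
/-- `y⁻¹` -/
def yyInv : LaurentR := mono 0 (-1)

/-- `A = ℂ[x,y]`, the ℂ-subspace spanned by monomials `xⁱyʲ` with `i ≥ 0`, `j ≥ 0`. -/
def Asub : Submodule ℂ LaurentR := Submodule.span ℂ {r | ∃ (i : ℕ) (j : ℕ), r = mono i j}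
/-- `B = ℂ[x,y,y⁻¹]`, the ℂ-subspace spanned by monomials `xⁱyʲ` with `i ≥ 0`, `j ∈ ℤ`. -/
def Bsub : Submodule ℂ LaurentR := Submodule.span ℂ {r | ∃ (i : ℕ) (j : ℤ), r = mono i j}
/-- `C = ℂ[x,x⁻¹,y]`, the ℂ-subspace spanned by monomials `xⁱyʲ` with `i ∈ ℤ`, `j ≥ 0`. -/
def Csub : Submodule ℂ LaurentR := Submodule.span ℂ {r | ∃ (i : ℤ) (j : ℕ), r = mono i j}
/-- `ℂ[y,y⁻¹]`, the ℂ-subspace spanned by the monomials `yʲ`, `j ∈ ℤ`. -/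
def Dy : Submodule ℂ LaurentR := Submodule.span ℂ {r | ∃ (j : ℤ), r = mono 0 j}
/-- `ℂ[x,x⁻¹]`, the ℂ-subspace spanned by the monomials `xⁱ`, `i ∈ ℤ`. -/
def Dx : Submodule ℂ LaurentR := Submodule.span ℂ {r | ∃ (i : ℤ), r = mono i 0}

/-- `u·L = {u·f : f ∈ L}` as a `ℂ`-submodule of `LaurentR`. -/
def dil (u : LaurentR) (L : Submodule ℂ LaurentR) : Submodule ℂ LaurentR :=
  L.map (LinearMap.mulLeft ℂ u)

open scoped Pointwise

lemma mem_span_single_iff (S : Set (ℤ × ℤ)) (f : LaurentR) :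
    f ∈ Submodule.span ℂ {r : LaurentR | ∃ p ∈ S, r = AddMonoidAlgebra.single p 1} ↔
      ∀ p ∈ f.coeff.support, p ∈ S := by
  constructor
  · intro hf
    induction hf using Submodule.span_induction with
    | mem r hr =>
      obtain ⟨p, hp, rfl⟩ := hr
      intro q hq
      have := Finsupp.support_single_subset hq
      simp only [Finset.mem_singleton] at this
      exact this ▸ hp
    | zero => simp
    | add f g _ _ hf hg =>
      intro q hq
      rcases Finset.mem_union.1 (Finsupp.support_add (by rwa [AddMonoidAlgebra.coeff_add] at hq)) with h | h
      · exact hf q h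
      · exact hg q h
    | smul c f _ hf =>
      intro q hq
      exact hf q (Finsupp.support_smul (by rwa [AddMonoidAlgebra.coeff_smul] at hq))
  · intro h
    rw [← AddMonoidAlgebra.sum_coeff_single f]
    apply Submodule.sum_mem
    intro p hp
    show AddMonoidAlgebra.single p (f.coeff p) ∈ _
    rw [show AddMonoidAlgebra.single p (f.coeff p) = f.coeff p • AddMonoidAlgebra.single p 1 by simp]
    exact Submodule.smul_mem _ _ (Submodule.subset_span ⟨p, h p hp, rfl⟩)

lemma Aset_eq : {r : LaurentR | ∃ (i : ℕ) (j : ℕ), r = mono i j}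
    = {r | ∃ p ∈ {p : ℤ × ℤ | 0 ≤ p.1 ∧ 0 ≤ p.2}, r = AddMonoidAlgebra.single p 1} := by
  ext r
  constructor
  · rintro ⟨i, j, rfl⟩
    exact ⟨(i, j), ⟨Int.natCast_nonneg i, Int.natCast_nonneg j⟩, rfl⟩
  · rintro ⟨⟨i, j⟩, ⟨hi, hj⟩, rfl⟩
    exact ⟨i.toNat, j.toNat, by simp [mono, Int.toNat_of_nonneg hi, Int.toNat_of_nonneg hj]⟩

lemma Bset_eq : {r : LaurentR | ∃ (i : ℕ) (j : ℤ), r = mono i j}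
    = {r | ∃ p ∈ {p : ℤ × ℤ | 0 ≤ p.1}, r = AddMonoidAlgebra.single p 1} := by
  ext r
  constructor
  · rintro ⟨i, j, rfl⟩
    exact ⟨(i, j), Int.natCast_nonneg i, rfl⟩
  · rintro ⟨⟨i, j⟩, hi, rfl⟩
    exact ⟨i.toNat, j, by simp [mono, Int.toNat_of_nonneg hi]⟩

lemma Cset_eq : {r : LaurentR | ∃ (i : ℤ) (j : ℕ), r = mono i j}
    = {r | ∃ p ∈ {p : ℤ × ℤ | 0 ≤ p.2}, r = AddMonoidAlgebra.single p 1} := by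
  ext r
  constructor
  · rintro ⟨i, j, rfl⟩
    exact ⟨(i, j), Int.natCast_nonneg j, rfl⟩
  · rintro ⟨⟨i, j⟩, hj, rfl⟩
    exact ⟨i, j.toNat, by simp [mono, Int.toNat_of_nonneg hj]⟩

lemma mem_Asub (f : LaurentR) : f ∈ Asub ↔ ∀ p ∈ f.coeff.support, 0 ≤ p.1 ∧ 0 ≤ p.2 := by
  rw [Asub, Aset_eq]; exact mem_span_single_iff _ f

lemma mem_Bsub (f : LaurentR) : f ∈ Bsub ↔ ∀ p ∈ f.coeff.support, 0 ≤ p.1 := by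
  rw [Bsub, Bset_eq]; exact mem_span_single_iff _ f

lemma mem_BC (f : LaurentR) : f ∈ Bsub ⊔ Csub ↔ ∀ p ∈ f.coeff.support, 0 ≤ p.1 ∨ 0 ≤ p.2 := by
  have hset : {r : LaurentR | ∃ p ∈ {p : ℤ × ℤ | 0 ≤ p.1}, r = AddMonoidAlgebra.single p 1}
      ∪ {r | ∃ p ∈ {p : ℤ × ℤ | 0 ≤ p.2}, r = AddMonoidAlgebra.single p 1}
      = {r | ∃ p ∈ {p : ℤ × ℤ | 0 ≤ p.1 ∨ 0 ≤ p.2}, r = AddMonoidAlgebra.single p 1} := by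
    ext r
    constructor
    · rintro (⟨p, hp, rfl⟩ | ⟨p, hp, rfl⟩)
      · exact ⟨p, Or.inl hp, rfl⟩
      · exact ⟨p, Or.inr hp, rfl⟩
    · rintro ⟨p, hp | hp, rfl⟩
      · exact Or.inl ⟨p, hp, rfl⟩
      · exact Or.inr ⟨p, hp, rfl⟩
  rw [Bsub, Csub, Bset_eq, Cset_eq, ← Submodule.span_union, hset]
  exact mem_span_single_iff _ f

/-- support of a product of a monomial and `f`. -/
lemma support_mono_mul (i j : ℤ) (f : LaurentR) (q : ℤ × ℤ) (hq : q ∈ ((mono i j) * f).coeff.support) :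
    ∃ b ∈ f.coeff.support, q = (i, j) + b := by
  have h := AddMonoidAlgebra.support_coeff_mul_subset (mono i j) f hq
  rw [show (mono i j).coeff.support = {(i, j)} from Finsupp.support_single_ne_zero _ one_ne_zero] at h
  rw [Finset.mem_add] at h
  obtain ⟨a, ha, b, hb, rfl⟩ := h
  simp only [Finset.mem_singleton] at ha
  exact ⟨b, hb, by rw [ha]⟩

lemma support_mul_mem (f g : LaurentR) (q : ℤ × ℤ) (hq : q ∈ (f * g).coeff.support) :
    ∃ a ∈ f.coeff.support, ∃ b ∈ g.coeff.support, q = a + b := by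
  have h := AddMonoidAlgebra.support_coeff_mul_subset f g hq
  rw [Finset.mem_add] at h
  obtain ⟨a, ha, b, hb, rfl⟩ := h
  exact ⟨a, ha, b, hb, rfl⟩

lemma xxInv_mul_xx : xxInv * xx = 1 := by
  rw [xx, xxInv, mono, mono, AddMonoidAlgebra.single_mul_single, mul_one,
    show ((-1, 0) : ℤ × ℤ) + (1, 0) = 0 from by decide]
  exact AddMonoidAlgebra.one_def.symm

lemma xxInv_mul_xx_mul (f : LaurentR) : xxInv * (xx * f) = f := by
  rw [← mul_assoc, xxInv_mul_xx, one_mul]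

/-- membership in `x⁻¹ B` via supports. -/
lemma mem_dil_xxInv_Bsub (f : LaurentR) :
    f ∈ dil xxInv Bsub ↔ ∀ p ∈ f.coeff.support, -1 ≤ p.1 := by
  constructor
  · rintro ⟨g, hg, rfl⟩
    intro p hp
    simp only [LinearMap.mulLeft_apply] at hp
    obtain ⟨b, hb, rfl⟩ := support_mono_mul (-1) 0 g p hp
    have := (mem_Bsub g).1 hg b hb
    simp only [Prod.fst_add]
    omega
  · intro h
    refine Submodule.mem_map.2 ⟨xx * f, ?_, by simpa using xxInv_mul_xx_mul f⟩
    rw [mem_Bsub]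
    intro p hp
    obtain ⟨b, hb, rfl⟩ := support_mono_mul 1 0 f p hp
    have := h b hb
    simp only [Prod.fst_add]
    omega

lemma one_mem_Asub : (1 : LaurentR) ∈ Asub := by
  apply Submodule.subset_span
  exact ⟨0, 0, by simp [mono, AddMonoidAlgebra.one_def]; rfl⟩

/-- membership in `x⁻¹ A ⊔ B` from support conditions. -/
lemma mem_sup_of_support (f : LaurentR)
    (h : ∀ p ∈ f.coeff.support, 0 ≤ p.1 ∨ (-1 ≤ p.1 ∧ 0 ≤ p.2)) :
    f ∈ dil xxInv Asub ⊔ Bsub := by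
  classical
  set f1 : LaurentR := AddMonoidAlgebra.ofCoeff (f.coeff.filter (fun p => p.1 < 0)) with hf1
  set f2 : LaurentR := AddMonoidAlgebra.ofCoeff (f.coeff.filter (fun p => ¬ p.1 < 0)) with hf2
  have hsplit : f1 + f2 = f := by
    rw [hf1, hf2, ← AddMonoidAlgebra.ofCoeff_add, Finsupp.filter_pos_add_filter_neg]
  have h1 : f1 ∈ dil xxInv Asub := by
    refine Submodule.mem_map.2 ⟨xx * f1, ?_, by simpa using xxInv_mul_xx_mul f1⟩
    rw [mem_Asub]
    intro p hp
    obtain ⟨b, hb, rfl⟩ := support_mono_mul 1 0 f1 p hp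
    rw [hf1, AddMonoidAlgebra.coeff_ofCoeff, Finsupp.support_filter, Finset.mem_filter] at hb
    have := h b hb.1
    simp only [Prod.fst_add, Prod.snd_add]
    constructor <;> omega
  have h2 : f2 ∈ Bsub := by
    rw [mem_Bsub]
    intro p hp
    rw [hf2, AddMonoidAlgebra.coeff_ofCoeff, Finsupp.support_filter, Finset.mem_filter] at hp
    omega
  have := Submodule.add_mem_sup h1 h2
  rwa [hsplit] at this

/-- membership in `x⁻¹ A ⊔ B` gives support conditions. -/
lemma support_of_mem_sup (f : LaurentR) (hf : f ∈ dil xxInv Asub ⊔ Bsub) :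
    ∀ p ∈ f.coeff.support, 0 ≤ p.1 ∨ (-1 ≤ p.1 ∧ 0 ≤ p.2) := by
  obtain ⟨f1, ⟨a, ha, rfl⟩, f2, h2, rfl⟩ := Submodule.mem_sup.1 hf
  intro p hp
  rcases Finset.mem_union.1 (Finsupp.support_add (by rwa [AddMonoidAlgebra.coeff_add] at hp)) with h | h
  · simp only [LinearMap.mulLeft_apply] at h
    obtain ⟨b, hb, rfl⟩ := support_mono_mul (-1) 0 a p h
    have := (mem_Asub a).1 ha b hb
    simp only [Prod.fst_add, Prod.snd_add]
    right; constructor <;> omega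
  · have := (mem_Bsub f2).1 h2 p h
    left; exact this

theorem stmt_11 :
    {f : LaurentR | f ∈ dil xxInv Bsub ∧ ∀ g ∈ Asub, f * g ∈ Bsub ⊔ Csub}
      = ((dil xxInv Asub ⊔ Bsub : Submodule ℂ LaurentR) : Set LaurentR) := by
  ext f
  simp only [Set.mem_setOf_eq, SetLike.mem_coe]
  constructor
  · rintro ⟨h1, h2⟩
    have hsupp1 := (mem_dil_xxInv_Bsub f).1 h1
    have hsupp2 : ∀ p ∈ f.coeff.support, 0 ≤ p.1 ∨ 0 ≤ p.2 := by
      have := h2 1 one_mem_Asub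
      rw [mul_one] at this
      exact (mem_BC f).1 this
    apply mem_sup_of_support
    intro p hp
    have := hsupp1 p hp
    have := hsupp2 p hp
    omega
  · intro hf
    have hsupp := support_of_mem_sup f hf
    refine ⟨(mem_dil_xxInv_Bsub f).2 fun p hp => by have := hsupp p hp; omega, ?_⟩
    intro g hg
    rw [mem_BC]
    intro p hp
    obtain ⟨a, ha, b, hb, rfl⟩ := support_mul_mem f g p hp
    have h1 := hsupp a ha
    have h2 := (mem_Asub g).1 hg b hb
    simp only [Prod.fst_add, Prod.snd_add]
    omega
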